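/- Let (Ω, F, P) be a probability space, let Z ≥ 0 be a random variable with E[Z] = 1 (a pricing density), let U : (0, ∞) → ℝ be nondecreasing and continuous, and let M > 0 almost surely satisfy E[Z M] ≤ x for some x > 0, E[(U(M))^+] < ∞, and E[U(M)] = z ∈ ℝ. Then for every ε > 0 there exist constants 0 < c ≤ C < ∞ and a random variable M′ with c ≤ M′ ≤ C almost surely, E[Z M′] ≤ x, and E[U(M′)] ≥ z − ε. -/

import Mathlib

open MeasureTheory Filter Set Topology

/-- Approximation of a budget-feasible claim by a claim bounded above and bounded away from
zero, with almost the same expected utility: if `E[ZM] ≤ x`, `E[U(M)] = z`, then for every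
`ε > 0` there are `0 < c ≤ C < ∞` and a claim `M'` with `c ≤ M' ≤ C` a.s., `E[ZM'] ≤ x`
and `E[U(M')] ≥ z − ε`. -/
theorem stmt14 {Ω : Type*} {mΩ : MeasurableSpace Ω} (P : Measure Ω) [IsProbabilityMeasure P]
    (Z : Ω → ℝ) (hZmeas : AEMeasurable Z P) (hZpos : ∀ᵐ ω ∂P, 0 ≤ Z ω)
    (hZint : Integrable Z P) (hZmean : ∫ ω, Z ω ∂P = 1)
    (U : ℝ → ℝ) (hmono : MonotoneOn U (Set.Ioi 0)) (hcont : ContinuousOn U (Set.Ioi 0))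
    (M : Ω → ℝ) (hMmeas : AEMeasurable M P) (hMpos : ∀ᵐ ω ∂P, 0 < M ω)
    (x : ℝ) (hx : 0 < x)
    (hbudget : Integrable (fun ω => Z ω * M ω) P) (hbudget' : ∫ ω, Z ω * M ω ∂P ≤ x)
    (hUposint : Integrable (fun ω => max (U (M ω)) 0) P)
    (z : ℝ) (hUint : Integrable (fun ω => U (M ω)) P) (hz : ∫ ω, U (M ω) ∂P = z) :
    ∀ ε > (0 : ℝ), ∃ c C : ℝ, 0 < c ∧ c ≤ C ∧
      ∃ M' : Ω → ℝ, AEMeasurable M' P ∧ (∀ᵐ ω ∂P, M' ω ∈ Set.Icc c C) ∧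
        (∫ ω, Z ω * M' ω ∂P) ≤ x ∧ (∫ ω, U (M' ω) ∂P) ≥ z - ε := by
  intro ε hε
  -- the approximating sequence
  set a : ℕ → ℝ := fun n => (n : ℝ) / (n + 1) with ha
  set b : ℕ → ℝ := fun n => x / (n + 1) with hb
  set Cc : ℕ → ℝ := fun n => x + n with hCc
  set F : ℕ → Ω → ℝ := fun n ω => min (max (a n * M ω + b n) (b n)) (Cc n) with hF
  have hn1pos : ∀ n : ℕ, (0 : ℝ) < n + 1 := fun n => by positivity
  have ha01 : ∀ n : ℕ, 0 ≤ a n ∧ a n ≤ 1 := by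
    intro n
    constructor
    · exact div_nonneg (Nat.cast_nonneg n) (hn1pos n).le
    · rw [div_le_one (hn1pos n)]; linarith
  have hbpos : ∀ n : ℕ, 0 < b n := fun n => div_pos hx (hn1pos n)
  have hba : ∀ n : ℕ, b n = (1 - a n) * x := by
    intro n
    have h := (hn1pos n).ne'
    simp only [hb, ha]
    field_simp [hb, ha]
    ring
  have hCcx : ∀ n : ℕ, x ≤ Cc n := by
    intro n
    simp only [hCc]
    nlinarith [Nat.cast_nonneg (α := ℝ) n]
  have hbC : ∀ n : ℕ, b n ≤ Cc n := by
    intro n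
    have : b n ≤ x := by
      rw [hba]; nlinarith [(ha01 n).1, (ha01 n).2]
    linarith [hCcx n]
  -- F is everywhere positive and in [b n, Cc n]
  have hFmem : ∀ n ω, F n ω ∈ Set.Icc (b n) (Cc n) := by
    intro n ω
    constructor
    · exact le_min (le_max_right _ _) (hbC n)
    · exact min_le_right _ _
  have hFpos : ∀ n ω, 0 < F n ω := fun n ω => lt_of_lt_of_le (hbpos n) (hFmem n ω).1
  -- pointwise bounds on the set {M > 0}
  have key : ∀ n : ℕ, ∀ ω, 0 < M ω →
      min (M ω) x ≤ F n ω ∧ F n ω ≤ a n * M ω + b n ∧ a n * M ω + b n ≤ max (M ω) x := by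
    intro n ω hM
    obtain ⟨ha0, ha1⟩ := ha01 n
    have ht_ge : min (M ω) x ≤ a n * M ω + b n := by
      rw [hba]
      nlinarith [min_le_left (M ω) x, min_le_right (M ω) x]
    have ht_le : a n * M ω + b n ≤ max (M ω) x := by
      rw [hba]
      nlinarith [le_max_left (M ω) x, le_max_right (M ω) x]
    have htb : b n ≤ a n * M ω + b n := by nlinarith
    have hmax : max (a n * M ω + b n) (b n) = a n * M ω + b n := max_eq_left htb
    refine ⟨?_, ?_, ht_le⟩
    · refine le_min ?_ ?_
      · rw [hmax]; exact ht_ge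
      · exact le_trans (le_trans (min_le_right _ _) (hCcx n)) le_rfl
    · exact le_trans (min_le_left _ _) hmax.le
  -- measurability of F n and of U ∘ F n
  have hFmeas : ∀ n, AEMeasurable (F n) P := by
    intro n
    exact (((hMmeas.const_mul (a n)).add_const (b n)).max aemeasurable_const).min
      aemeasurable_const
  have hVcont : ∀ n : ℕ, Continuous fun t : ℝ => U (min (max t (b n)) (Cc n)) := by
    intro n
    refine hcont.comp_continuous ((continuous_id.max continuous_const).min continuous_const) ?_
    intro t
    exact lt_min (lt_of_lt_of_le (hbpos n) (le_max_right _ _)) (lt_of_lt_of_le hx (hCcx n))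
  have hUFmeas : ∀ n, AEStronglyMeasurable (fun ω => U (F n ω)) P := by
    intro n
    have : AEMeasurable (fun ω => U (min (max (a n * M ω + b n) (b n)) (Cc n))) P :=
      (hVcont n).measurable.comp_aemeasurable ((hMmeas.const_mul (a n)).add_const (b n))
    exact this.aestronglyMeasurable
  -- dominated convergence
  have hbound_int : Integrable (fun ω => |U (M ω)| + |U x|) P :=
    hUint.abs.add (integrable_const _)
  have h_bound : ∀ n, ∀ᵐ ω ∂P, ‖U (F n ω)‖ ≤ |U (M ω)| + |U x| := by
    intro n
    filter_upwards [hMpos] with ω hM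
    obtain ⟨h1, h2, h3⟩ := key n ω hM
    have hminpos : (0 : ℝ) < min (M ω) x := lt_min hM hx
    have hUlow : U (min (M ω) x) ≤ U (F n ω) :=
      hmono hminpos (lt_of_lt_of_le hminpos h1) h1
    have hUhigh : U (F n ω) ≤ U (max (M ω) x) :=
      hmono (lt_of_lt_of_le hminpos h1) (lt_of_lt_of_le hM (le_max_left _ _)) (le_trans h2 h3)
    rw [Real.norm_eq_abs, abs_le]
    constructor
    · rcases min_cases (M ω) x with ⟨he, _⟩ | ⟨he, _⟩ <;> rw [he] at hUlow
      · nlinarith [neg_abs_le (U (M ω)), abs_nonneg (U x)]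
      · nlinarith [neg_abs_le (U x), abs_nonneg (U (M ω))]
    · rcases max_cases (M ω) x with ⟨he, _⟩ | ⟨he, _⟩ <;> rw [he] at hUhigh
      · nlinarith [le_abs_self (U (M ω)), abs_nonneg (U x)]
      · nlinarith [le_abs_self (U x), abs_nonneg (U (M ω))]
  have h_lim : ∀ᵐ ω ∂P, Tendsto (fun n => U (F n ω)) atTop (𝓝 (U (M ω))) := by
    filter_upwards [hMpos] with ω hM
    have hta : Tendsto (fun n : ℕ => a n * M ω + b n) atTop (𝓝 (M ω)) := by
      have h1 : Tendsto (fun n : ℕ => a n * M ω) atTop (𝓝 (1 * M ω)) :=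
        (tendsto_natCast_div_add_atTop (1 : ℝ)).mul_const (M ω)
      have h2 : Tendsto (fun n : ℕ => b n) atTop (𝓝 0) := by
        have := tendsto_one_div_add_atTop_nhds_zero_nat.const_mul x
        simpa [hb, mul_one_div, div_eq_mul_inv] using this
      simpa using h1.add h2
    have htF : Tendsto (fun n => F n ω) atTop (𝓝 (M ω)) := by
      refine hta.congr' ?_
      have hev : ∀ᶠ n : ℕ in atTop, M ω ≤ (n : ℝ) := by
        obtain ⟨N, hN⟩ := exists_nat_ge (M ω)
        exact eventually_atTop.2 ⟨N, fun m hm => le_trans hN (by exact_mod_cast hm)⟩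
      filter_upwards [hev] with n hn
      obtain ⟨_, h2, h3⟩ := key n ω hM
      have htb : b n ≤ a n * M ω + b n := by nlinarith [(ha01 n).1]
      have hle : a n * M ω + b n ≤ Cc n := by
        refine le_trans h3 ?_
        rcases max_cases (M ω) x with ⟨he, _⟩ | ⟨he, _⟩ <;> rw [he] <;> simp only [hCc] <;>
          nlinarith [Nat.cast_nonneg (α := ℝ) n]
      simp only [hF, max_eq_left htb, min_eq_left hle]
    have hUcont : ContinuousAt U (M ω) :=
      hcont.continuousAt (Ioi_mem_nhds hM)
    exact (hUcont.tendsto).comp htF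
  have hDCT : Tendsto (fun n => ∫ ω, U (F n ω) ∂P) atTop (𝓝 z) := by
    rw [← hz]
    exact tendsto_integral_of_dominated_convergence _ hUFmeas hbound_int h_bound h_lim
  obtain ⟨n, hn⟩ := (hDCT.eventually (eventually_ge_nhds (by linarith : z - ε < z))).exists
  -- budget constraint for F n
  have hZFint : Integrable (fun ω => Z ω * F n ω) P := by
    refine Integrable.mono' (hZint.mul_const (Cc n)) ((hZmeas.mul (hFmeas n)).aestronglyMeasurable) ?_
    filter_upwards [hZpos] with ω hZ
    rw [Real.norm_eq_abs, abs_mul, abs_of_nonneg hZ, abs_of_nonneg (hFpos n ω).le]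
    exact mul_le_mul_of_nonneg_left (hFmem n ω).2 hZ
  have hGint : Integrable (fun ω => a n * (Z ω * M ω) + ((1 - a n) * x) * Z ω) P :=
    (hbudget.const_mul (a n)).add (hZint.const_mul ((1 - a n) * x))
  have hZFle : ∫ ω, Z ω * F n ω ∂P ≤ x := by
    have hle : ∫ ω, Z ω * F n ω ∂P ≤ ∫ ω, (a n * (Z ω * M ω) + ((1 - a n) * x) * Z ω) ∂P := by
      refine integral_mono_ae hZFint hGint ?_
      filter_upwards [hZpos, hMpos] with ω hZ hM
      obtain ⟨_, h2, _⟩ := key n ω hM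
      have : Z ω * F n ω ≤ Z ω * (a n * M ω + b n) := mul_le_mul_of_nonneg_left h2 hZ
      rw [hba] at this
      nlinarith
    have heq : ∫ ω, (a n * (Z ω * M ω) + ((1 - a n) * x) * Z ω) ∂P
        = a n * (∫ ω, Z ω * M ω ∂P) + ((1 - a n) * x) * ∫ ω, Z ω ∂P := by
      rw [integral_add (hbudget.const_mul (a n)) (hZint.const_mul ((1 - a n) * x)),
        integral_const_mul, integral_const_mul]
    rw [heq, hZmean] at hle
    obtain ⟨ha0, ha1⟩ := ha01 n
    nlinarith
  refine ⟨b n, Cc n, hbpos n, hbC n, F n, hFmeas n, Eventually.of_forall (hFmem n), hZFle, hn⟩
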